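/- Let n ≥ 1, let V be a real inner product space, let (a_ij) be a real symmetric n×n matrix with vanishing trace ∑_{i=1}^n a_ii = 0, and let v_1,…,v_n ∈ V. Then ∑_{i,j=1}^n a_ij ⟨v_i, v_j⟩ ≥ −√((n−1)/n) · ‖a‖_F · ∑_{i=1}^n ‖v_i‖². -/

import Mathlib

/-- Vector-valued version of Lemma 4.1: for a real symmetric trace-free `n × n`
matrix `a` and vectors `v 1, …, v n` in a real inner product space,
`∑ i j, a i j * ⟪v i, v j⟫ ≥ -√((n-1)/n) * ‖a‖_F * ∑ i, ‖v i‖²`. -/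
theorem stmt_1 (n : ℕ) (hn : 1 ≤ n) (V : Type*) [NormedAddCommGroup V]
    [InnerProductSpace ℝ V] (a : Matrix (Fin n) (Fin n) ℝ)
    (hsymm : ∀ i j, a i j = a j i) (htrace : ∑ i, a i i = 0) (v : Fin n → V) :
    ∑ i, ∑ j, a i j * (inner ℝ (v i) (v j) : ℝ) ≥
      -Real.sqrt (((n : ℝ) - 1) / n) * Real.sqrt (∑ i, ∑ j, (a i j) ^ 2) *
        ∑ i, ‖v i‖ ^ 2 := by
  have hn' : (0:ℝ) < n := by exact_mod_cast hn
  set T := ∑ i, ‖v i‖ ^ 2 with hT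
  have hT0 : 0 ≤ T := by positivity
  set N2 := ∑ i, ∑ j, (a i j)^2 with hN2
  have hN20 : 0 ≤ N2 := by positivity
  set S := ∑ i, ∑ j, a i j * (inner ℝ (v i) (v j) : ℝ) with hS
  have hcoef : (0:ℝ) ≤ ((n:ℝ)-1)/n := by
    apply div_nonneg _ hn'.le
    have : (1:ℝ) ≤ n := by exact_mod_cast hn
    linarith
  have key : S^2 ≤ (((n:ℝ)-1)/n) * N2 * T^2 := by
    have hg : S = ∑ p : Fin n × Fin n, a p.1 p.2 *
        ((inner ℝ (v p.1) (v p.2) : ℝ) - if p.1 = p.2 then T / n else 0) := by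
      rw [Fintype.sum_prod_type]
      simp only [mul_sub, Finset.sum_sub_distrib, mul_ite, mul_zero]
      simp only [Finset.sum_ite_eq, Finset.mem_univ, if_true]
      rw [← Finset.sum_mul, htrace, zero_mul, sub_zero, hS]
    have cs := Finset.sum_mul_sq_le_sq_mul_sq Finset.univ
      (fun p : Fin n × Fin n => a p.1 p.2)
      (fun p : Fin n × Fin n => (inner ℝ (v p.1) (v p.2) : ℝ) - if p.1 = p.2 then T / n else 0)
    rw [← hg] at cs
    have hNeq : ∑ p : Fin n × Fin n, (a p.1 p.2)^2 = N2 := by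
      rw [Fintype.sum_prod_type, hN2]
    rw [hNeq] at cs
    have hgsq : ∑ p : Fin n × Fin n,
        ((inner ℝ (v p.1) (v p.2) : ℝ) - if p.1 = p.2 then T / n else 0)^2
        ≤ (((n:ℝ)-1)/n) * T^2 := by
      have expand : ∑ p : Fin n × Fin n,
          ((inner ℝ (v p.1) (v p.2) : ℝ) - if p.1 = p.2 then T / n else 0)^2
          = (∑ p : Fin n × Fin n, (inner ℝ (v p.1) (v p.2) : ℝ)^2) - T^2/n := by
        have h1 : ∀ p : Fin n × Fin n,
            ((inner ℝ (v p.1) (v p.2) : ℝ) - if p.1 = p.2 then T / n else 0)^2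
            = (inner ℝ (v p.1) (v p.2) : ℝ)^2
              - 2 * (inner ℝ (v p.1) (v p.2) : ℝ) * (if p.1 = p.2 then T / n else 0)
              + (if p.1 = p.2 then (T / n)^2 else 0) := by
          intro p
          by_cases h : p.1 = p.2 <;> simp [h] <;> ring
        simp_rw [h1]
        rw [Finset.sum_add_distrib, Finset.sum_sub_distrib]
        have h2 : ∑ p : Fin n × Fin n,
            2 * (inner ℝ (v p.1) (v p.2) : ℝ) * (if p.1 = p.2 then T / n else 0)
            = 2 * T^2 / n := by
          rw [Fintype.sum_prod_type]
          simp only [mul_ite, mul_zero, Finset.sum_ite_eq, Finset.mem_univ, if_true]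
          have : ∀ i : Fin n, 2 * (inner ℝ (v i) (v i) : ℝ) * (T/n) = (T/n) * 2 * ‖v i‖^2 := by
            intro i; rw [real_inner_self_eq_norm_sq]; ring
          simp_rw [this]
          rw [← Finset.mul_sum, ← hT]; ring
        have h3 : ∑ p : Fin n × Fin n, (if p.1 = p.2 then (T / n)^2 else 0) = T^2/n := by
          rw [Fintype.sum_prod_type]
          simp only [Finset.sum_ite_eq, Finset.mem_univ, if_true, Finset.sum_const,
            Finset.card_univ, Fintype.card_fin, nsmul_eq_mul]
          field_simp
        rw [h2, h3]; ring
      rw [expand]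
      have hsum : ∑ p : Fin n × Fin n, (inner ℝ (v p.1) (v p.2) : ℝ)^2 ≤ T^2 := by
        have : ∀ p : Fin n × Fin n, (inner ℝ (v p.1) (v p.2) : ℝ)^2 ≤ ‖v p.1‖^2 * ‖v p.2‖^2 := by
          intro p
          have h := abs_real_inner_le_norm (v p.1) (v p.2)
          calc (inner ℝ (v p.1) (v p.2) : ℝ)^2 = |(inner ℝ (v p.1) (v p.2) : ℝ)|^2 := (sq_abs _).symm
            _ ≤ (‖v p.1‖ * ‖v p.2‖)^2 := by
                apply pow_le_pow_left₀ (abs_nonneg _) h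
            _ = ‖v p.1‖^2 * ‖v p.2‖^2 := by ring
        calc ∑ p : Fin n × Fin n, (inner ℝ (v p.1) (v p.2) : ℝ)^2
            ≤ ∑ p : Fin n × Fin n, ‖v p.1‖^2 * ‖v p.2‖^2 := Finset.sum_le_sum (fun p _ => this p)
          _ = T^2 := by rw [Fintype.sum_prod_type]; simp_rw [← Finset.mul_sum, ← Finset.sum_mul, ← hT]; ring
      have : T^2 - T^2/n = (((n:ℝ)-1)/n) * T^2 := by field_simp
      linarith
    calc S^2 ≤ N2 * ((((n:ℝ)-1)/n) * T^2) :=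
          le_trans cs (mul_le_mul_of_nonneg_left hgsq hN20)
      _ = (((n:ℝ)-1)/n) * N2 * T^2 := by ring
  have habs : |S| ≤ Real.sqrt (((n:ℝ)-1)/n) * Real.sqrt N2 * T := by
    rw [← Real.sqrt_sq_eq_abs]
    calc Real.sqrt (S^2) ≤ Real.sqrt ((((n:ℝ)-1)/n) * N2 * T^2) := Real.sqrt_le_sqrt key
      _ = Real.sqrt (((n:ℝ)-1)/n) * Real.sqrt N2 * T := by
          rw [Real.sqrt_mul (by positivity), Real.sqrt_mul hcoef, Real.sqrt_sq hT0]
  have := neg_abs_le S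
  calc -Real.sqrt (((n:ℝ)-1)/n) * Real.sqrt N2 * T
      = -(Real.sqrt (((n:ℝ)-1)/n) * Real.sqrt N2 * T) := by ring
    _ ≤ -|S| := neg_le_neg habs
    _ ≤ S := neg_abs_le S
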